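/- Let E be a real inner product space, p ∈ (1,∞), t ≥ 0 a real number, and X, Y ∈ E. Then p·t^{p−1}·‖Y‖^{p−2}⟨X,Y⟩ ≤ ‖X‖^p + (p−1)·t^p·‖Y‖^p, where the left-hand side is interpreted as 0 when Y = 0. -/

import Mathlib

open scoped RealInnerProductSpace

lemma young_scalar_aux (p : ℝ) (hp : 1 < p) {a c : ℝ} (ha : 0 ≤ a) (hc : 0 ≤ c) :
    p * c ^ (p - 1) * a ≤ a ^ p + (p - 1) * c ^ p := by
  set q := p / (p - 1) with hq
  have hpq : p.HolderConjugate q := .conjExponent hp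
  have hy := Real.young_inequality_of_nonneg ha (Real.rpow_nonneg hc (p - 1)) hpq
  have hcq : (c ^ (p - 1)) ^ q = c ^ p := by
    rw [← Real.rpow_mul hc]
    congr 1
    rw [hq, mul_comm]; exact div_mul_cancel₀ p (by linarith)
  rw [hcq] at hy
  have hp0 : (0:ℝ) < p := by linarith
  have h1 : p - 1 ≠ 0 := by linarith
  have key : p * (a ^ p / p + c ^ p / q) = a ^ p + (p - 1) * c ^ p := by
    rw [hq]; field_simp
  calc p * c ^ (p - 1) * a = p * (a * c ^ (p - 1)) := by ring
    _ ≤ p * (a ^ p / p + c ^ p / q) := by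
        exact mul_le_mul_of_nonneg_left hy hp0.le
    _ = a ^ p + (p - 1) * c ^ p := key

/-- the pointwise vector inequality
`p·t^{p-1}·‖Y‖^{p-2}⟨X,Y⟩ ≤ ‖X‖^p + (p-1)·t^p·‖Y‖^p` for `p ∈ (1,∞)`, `t ≥ 0`
and vectors `X, Y` in a real inner product space. (Real powers are `Real.rpow`,
so `‖Y‖^(p-2) = 0` when `Y = 0` and `p ≠ 2`; for `p = 2` the inner product
`⟨X,0⟩` vanishes, so the left-hand side is `0` when `Y = 0`, as stated.) -/
theorem young_cauchy_schwarz_vector_inequality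
    {E : Type*} [NormedAddCommGroup E] [InnerProductSpace ℝ E]
    (p t : ℝ) (hp : 1 < p) (ht : 0 ≤ t) (X Y : E) :
    p * t ^ (p - 1) * ‖Y‖ ^ (p - 2) * ⟪X, Y⟫
      ≤ ‖X‖ ^ p + (p - 1) * t ^ p * ‖Y‖ ^ p := by
  rcases eq_or_ne Y 0 with hY | hY
  · simp only [hY, inner_zero_right, mul_zero]
    have h1 : (0:ℝ) ≤ ‖X‖ ^ p := Real.rpow_nonneg (norm_nonneg X) p
    have h2 : (0:ℝ) ≤ (p - 1) * t ^ p * ‖(0:E)‖ ^ p := by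
      apply mul_nonneg (mul_nonneg (by linarith) (Real.rpow_nonneg ht p))
      exact Real.rpow_nonneg (norm_nonneg _) p
    linarith
  · have hY0 : (0:ℝ) < ‖Y‖ := norm_pos_iff.mpr hY
    have hmul : (0:ℝ) ≤ p * t ^ (p - 1) * ‖Y‖ ^ (p - 2) := by
      apply mul_nonneg (mul_nonneg (by linarith) (Real.rpow_nonneg ht _))
      exact Real.rpow_nonneg hY0.le _
    have hCS : ⟪X, Y⟫ ≤ ‖X‖ * ‖Y‖ := real_inner_le_norm X Y
    have step1 : p * t ^ (p - 1) * ‖Y‖ ^ (p - 2) * ⟪X, Y⟫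
        ≤ p * t ^ (p - 1) * ‖Y‖ ^ (p - 2) * (‖X‖ * ‖Y‖) :=
      mul_le_mul_of_nonneg_left hCS hmul
    have hpow : ‖Y‖ ^ (p - 2) * ‖Y‖ = ‖Y‖ ^ (p - 1) := by
      rw [← Real.rpow_add_one hY0.ne' (p - 2)]
      ring_nf
    have hmt : t ^ (p - 1) * ‖Y‖ ^ (p - 1) = (t * ‖Y‖) ^ (p - 1) :=
      (Real.mul_rpow ht hY0.le).symm
    have key := young_scalar_aux p hp (norm_nonneg X) (mul_nonneg ht hY0.le)
    have htY : (t * ‖Y‖) ^ p = t ^ p * ‖Y‖ ^ p := Real.mul_rpow ht hY0.le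
    calc p * t ^ (p - 1) * ‖Y‖ ^ (p - 2) * ⟪X, Y⟫
        ≤ p * t ^ (p - 1) * ‖Y‖ ^ (p - 2) * (‖X‖ * ‖Y‖) := step1
      _ = p * (t ^ (p - 1) * (‖Y‖ ^ (p - 2) * ‖Y‖)) * ‖X‖ := by ring
      _ = p * (t * ‖Y‖) ^ (p - 1) * ‖X‖ := by rw [hpow, hmt]
      _ ≤ ‖X‖ ^ p + (p - 1) * (t * ‖Y‖) ^ p := key
      _ = ‖X‖ ^ p + (p - 1) * t ^ p * ‖Y‖ ^ p := by rw [htY]; ring
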